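/- Let a, b ∈ ℝ with -1 < a < 0 and b < 0. Then the function f(x) = |1 + a·exp(-x/b)|·x is strictly increasing on (b·ln|a|, ∞); more precisely, for all x > b·ln|a| one has f(x) = -(1 + a·exp(-x/b))·x and f'(x) = -a·(1 - x/b)·exp(-x/b) - 1 > -ln|a| > 0. -/

import Mathlib

open Real

theorem stmt_11 (a b : ℝ) (ha1 : -1 < a) (ha2 : a < 0) (hb : b < 0) :
    StrictMonoOn (fun x : ℝ => |1 + a * Real.exp (-x / b)| * x)
      (Set.Ioi (b * Real.log |a|)) ∧
    ∀ x : ℝ, b * Real.log |a| < x →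
      |1 + a * Real.exp (-x / b)| * x = -((1 + a * Real.exp (-x / b)) * x) ∧
      HasDerivAt (fun x : ℝ => |1 + a * Real.exp (-x / b)| * x)
        (-a * (1 - x / b) * Real.exp (-x / b) - 1) x ∧
      -Real.log |a| < -a * (1 - x / b) * Real.exp (-x / b) - 1 ∧
      0 < -Real.log |a| := by
  have ha0 : (0:ℝ) < -a := by linarith
  have habs : |a| = -a := abs_of_neg ha2
  set L := Real.log |a| with hLdef
  have hLneg : L < 0 := by
    rw [hLdef, habs]
    exact Real.log_neg ha0 (by linarith)
  have hb0 : b ≠ 0 := ne_of_lt hb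
  have key : ∀ x : ℝ, (-a) * Real.exp (-x/b) = Real.exp (L - x/b) := by
    intro x
    rw [show L - x/b = L + (-x/b) by ring, Real.exp_add, hLdef, habs,
      Real.exp_log ha0]
  have hs : ∀ x : ℝ, b * L < x → 0 < L - x/b := by
    intro x hx
    have : x / b < L := by
      rw [div_lt_iff_of_neg hb]; linarith
    linarith
  have hneg : ∀ x : ℝ, b * L < x → 1 + a * Real.exp (-x/b) < 0 := by
    intro x hx
    have h2 := Real.add_one_lt_exp (ne_of_gt (hs x hx))
    have h1' : a * Real.exp (-x/b) = -Real.exp (L - x/b) := by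
      linear_combination -(key x)
    have := hs x hx
    linarith
  have hderiv : ∀ x : ℝ, b * L < x →
      HasDerivAt (fun x : ℝ => |1 + a * Real.exp (-x / b)| * x)
        (-a * (1 - x / b) * Real.exp (-x / b) - 1) x := by
    intro x hx
    have h1 : HasDerivAt (fun y : ℝ => -y / b) (-1 / b) x := by
      simpa using ((hasDerivAt_id x).neg.div_const b)
    have h6 := (((h1.exp.const_mul a).const_add 1).mul (hasDerivAt_id x)).neg
    have heq : (fun x : ℝ => |1 + a * Real.exp (-x / b)| * x)
        =ᶠ[nhds x] fun y : ℝ => -((1 + a * Real.exp (-y/b)) * y) := by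
      filter_upwards [isOpen_Ioi.mem_nhds (show x ∈ Set.Ioi (b*L) from hx)]
        with y hy
      rw [abs_of_neg (hneg y hy)]
      ring
    have h7 := h6.congr_of_eventuallyEq heq
    exact h7.congr_deriv (by simp only [id]; ring)
  have hlow : ∀ x : ℝ, b * L < x →
      -L < -a * (1 - x / b) * Real.exp (-x / b) - 1 := by
    intro x hx
    have hsx := hs x hx
    have h2 := Real.add_one_lt_exp (ne_of_gt hsx)
    have h3 : -a * (1 - x/b) * Real.exp (-x/b)
        = (1 - x/b) * Real.exp (L - x/b) := by
      linear_combination (1 - x/b) * key x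
    rw [h3]
    nlinarith [mul_pos (show (0:ℝ) < 1 - L + (L - x/b) by linarith)
      (show (0:ℝ) < Real.exp (L - x/b) - ((L - x/b) + 1) by linarith)]
  constructor
  · apply strictMonoOn_of_deriv_pos (convex_Ioi _)
    · exact (Continuous.abs (by continuity)).mul continuous_id |>.continuousOn
    · intro x hx
      rw [interior_Ioi] at hx
      rw [(hderiv x hx).deriv]
      have := hlow x hx
      linarith
  · intro x hx
    refine ⟨?_, hderiv x hx, hlow x hx, by linarith⟩
    rw [abs_of_neg (hneg x hx)]
    ring
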